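/- arXiv:2601.08561 — 2 statements merged into one kernel-verified Lean document; each statement's English description precedes it below -/
import Mathlib

section
/- Let (Ω¹,μ₁) and (Ω²,μ₂) be compact subsets of ℝ^d with probability measures, let 1 ≤ q ≤ ∞ with q' := q/(q−1), and let K(x,y) be a measurable kernel on Ω¹×Ω² such that K(z,·) ∈ L_{q'}(Ω²,μ₂) for every z ∈ Ω¹. Then for every m ∈ ℕ, ϱ_m(W^K_q, L_∞(Ω¹)) = σ_m(K, 𝓛𝓚(∞,q'))_{L*_{∞,q'}}, i.e., the linear sampling recovery error of W^K_q in the uniform norm equals the infimum over points ξ¹,…,ξ^m ∈ Ω¹ and functions ψ₁,…,ψ_m of sup_{x∈Ω¹} ‖K(x,·) − ∑_{j=1}^m ψ_j(x)K(ξ^j,·)‖_{L_{q'}(Ω²,μ₂)}. -/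
open MeasureTheory Filter Finset
open scoped ENNReal NNReal
open Set

set_option maxHeartbeats 1000000

noncomputable section

section Helpers
variable {α : Type*} [MeasurableSpace α] (μ : Measure α)

lemma mul_conj_norm (z : ℂ) : z * (starRingEnd ℂ) z = ((‖z‖^2 : ℝ) : ℂ) := by
  exact_mod_cast Complex.mul_conj' z

lemma le_of_forall_lt_le {a b : ℝ≥0∞} (h : ∀ c < a, c ≤ b) : a ≤ b := by
  by_contra hab
  push_neg at hab
  obtain ⟨c, hbc, hca⟩ := exists_between hab
  exact absurd (h c hca) (not_le.mpr hbc)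

lemma ofReal_norm_eq_coe_nnnorm {E : Type*} [SeminormedAddCommGroup E] (a : E) :
    ENNReal.ofReal ‖a‖ = (‖a‖₊ : ℝ≥0∞) := ofReal_norm a

lemma eLpNorm_one_eq_lintegral_nnnorm {E : Type*} [NormedAddCommGroup E] {ν : Measure α}
    {f : α → E} : eLpNorm f 1 ν = ∫⁻ x, (‖f x‖₊ : ℝ≥0∞) ∂ν := eLpNorm_one_eq_lintegral_enorm

lemma eLpNorm_eq_lintegral_rpow_nnnorm {E : Type*} [NormedAddCommGroup E] {ν : Measure α}
    {p : ℝ≥0∞} (h0 : p ≠ 0) (ht : p ≠ ∞) {f : α → E} :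
    eLpNorm f p ν = (∫⁻ x, (‖f x‖₊ : ℝ≥0∞) ^ p.toReal ∂ν) ^ (1 / p.toReal) :=
  eLpNorm_eq_lintegral_rpow_enorm_toReal h0 ht

lemma ennnorm_integral_le_lintegral_ennnorm {ν : Measure α} (f : α → ℂ) :
    (‖∫ a, f a ∂ν‖₊ : ℝ≥0∞) ≤ ∫⁻ a, (‖f a‖₊ : ℝ≥0∞) ∂ν := enorm_integral_le_lintegral_enorm f

lemma ofReal_integral_norm_eq_lintegral_nnnorm {ν : Measure α} {f : α → ℂ} (hf : Integrable f ν) :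
    ENNReal.ofReal (∫ x, ‖f x‖ ∂ν) = ∫⁻ x, (‖f x‖₊ : ℝ≥0∞) ∂ν :=
  ofReal_integral_norm_eq_lintegral_enorm hf

lemma Measurable.ennnorm {f : α → ℂ} (hf : Measurable f) :
    Measurable (fun a => (‖f a‖₊ : ℝ≥0∞)) := hf.enorm

lemma holder_bound {q q' : ℝ≥0∞} (hqq' : q⁻¹ + q'⁻¹ = 1)
    {g φ : α → ℂ} (hg : AEStronglyMeasurable g μ) (hφ : AEStronglyMeasurable φ μ) :
    (‖∫ y, g y * φ y ∂μ‖₊ : ℝ≥0∞) ≤ eLpNorm g q' μ * eLpNorm φ q μ := by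
  calc (‖∫ y, g y * φ y ∂μ‖₊ : ℝ≥0∞) ≤ ∫⁻ y, ‖g y * φ y‖₊ ∂μ :=
        ennnorm_integral_le_lintegral_ennnorm _
    _ = eLpNorm (φ • g) 1 μ := by
        rw [eLpNorm_one_eq_lintegral_nnnorm]
        exact lintegral_congr fun y => by simp [mul_comm]
    _ ≤ eLpNorm φ q μ * eLpNorm g q' μ := by
        haveI : ENNReal.HolderTriple q q' 1 := ⟨by rw [inv_one]; exact hqq'⟩
        exact eLpNorm_smul_le_mul_eLpNorm hg hφ
    _ = _ := mul_comm _ _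

lemma integrable_mul_helper {q q' : ℝ≥0∞} (hqq' : q⁻¹ + q'⁻¹ = 1)
    {g φ : α → ℂ} (hg : MemLp g q' μ) (hφ : MemLp φ q μ) :
    Integrable (fun y => g y * φ y) μ := by
  haveI : ENNReal.HolderTriple q q' 1 := ⟨by rw [inv_one]; exact hqq'⟩
  have := hg.smul hφ (r := 1)
  rw [memLp_one_iff_integrable] at this
  exact this.congr (Eventually.of_forall fun y => mul_comm _ _)

lemma dual_case_top [IsProbabilityMeasure μ] {g : α → ℂ} (hg : Measurable g)
    (hg1 : MemLp g 1 μ) :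
    eLpNorm g 1 μ ≤ ⨆ (φ : α → ℂ) (_ : Measurable φ ∧ eLpNorm φ ∞ μ ≤ 1),
      (‖∫ y, g y * φ y ∂μ‖₊ : ℝ≥0∞) := by
  set φ : α → ℂ := fun y => (starRingEnd ℂ) (g y) / (‖g y‖ : ℂ) with hφdef
  have hφm : Measurable φ :=
    (Complex.continuous_conj.measurable.comp hg).div (Complex.measurable_ofReal.comp hg.norm)
  have hφb : ∀ y, ‖φ y‖ ≤ 1 := by
    intro y
    simp only [hφdef, norm_div, Complex.norm_real, RCLike.norm_conj, Real.norm_eq_abs,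
      abs_of_nonneg (norm_nonneg (g y))]
    exact div_self_le_one _
  have hbound : eLpNorm φ ∞ μ ≤ 1 := by
    rw [eLpNorm_exponent_top]
    exact (eLpNormEssSup_le_of_ae_bound (C := 1) (Eventually.of_forall hφb)).trans (by simp)
  have hmul : ∀ y, g y * φ y = ((‖g y‖ : ℝ) : ℂ) := by
    intro y
    by_cases h : g y = 0
    · simp [hφdef, h]
    · have h0 : (‖g y‖ : ℂ) ≠ 0 := by exact_mod_cast norm_ne_zero_iff.mpr h
      rw [hφdef]
      rw [mul_div_assoc', mul_conj_norm, div_eq_iff h0, ← Complex.ofReal_mul]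
      norm_cast
      ring
  have hint : ∫ y, g y * φ y ∂μ = ((∫ y, ‖g y‖ ∂μ : ℝ) : ℂ) := by
    simp only [hmul]
    exact integral_ofReal
  have hgi : Integrable g μ := memLp_one_iff_integrable.mp hg1
  have hkey : (‖∫ y, g y * φ y ∂μ‖₊ : ℝ≥0∞) = eLpNorm g 1 μ := by
    rw [hint, eLpNorm_one_eq_lintegral_nnnorm, ← ofReal_integral_norm_eq_lintegral_nnnorm hgi,
      ← ofReal_norm_eq_coe_nnnorm, Complex.norm_real, Real.norm_eq_abs,
      abs_of_nonneg (integral_nonneg fun y => norm_nonneg _)]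
  refine le_trans hkey.ge ?_
  exact le_iSup₂ (f := fun (ψ : α → ℂ) (_ : Measurable ψ ∧ eLpNorm ψ ∞ μ ≤ 1) =>
    (‖∫ y, g y * ψ y ∂μ‖₊ : ℝ≥0∞)) φ ⟨hφm, hbound⟩

lemma dual_case_one [IsProbabilityMeasure μ] {g : α → ℂ} (hg : Measurable g)
    (hgt : MemLp g ∞ μ) :
    eLpNorm g ∞ μ ≤ ⨆ (φ : α → ℂ) (_ : Measurable φ ∧ eLpNorm φ 1 μ ≤ 1),
      (‖∫ y, g y * φ y ∂μ‖₊ : ℝ≥0∞) := by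
  refine le_of_forall_lt_le fun c hc => ?_
  have hctop : c ≠ ∞ := ne_top_of_lt hc
  rw [eLpNorm_exponent_top, eLpNormEssSup] at hc
  set A : Set α := {y | c < (‖g y‖₊ : ℝ≥0∞)} with hAdef
  have hAm : MeasurableSet A := measurableSet_lt measurable_const hg.ennnorm
  have hA0 : μ A ≠ 0 := by
    intro h0
    refine absurd (essSup_le_of_ae_le c ?_) (not_le.mpr hc)
    refine (ae_iff).mpr ?_
    simpa [hAdef, not_le, enorm_eq_nnnorm] using h0
  have hAfin : μ A ≠ ∞ := measure_ne_top μ A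
  set a : ℝ := (μ A).toReal with hadef
  have ha : 0 < a := ENNReal.toReal_pos hA0 hAfin
  set φ : α → ℂ := A.indicator (fun y => (starRingEnd ℂ) (g y) / ((‖g y‖ : ℂ) * (a : ℂ)))
    with hφdef
  have hφm : Measurable φ := by
    refine Measurable.indicator ?_ hAm
    exact (Complex.continuous_conj.measurable.comp hg).div
      ((Complex.measurable_ofReal.comp hg.norm).mul measurable_const)
  have hgz : ∀ y ∈ A, g y ≠ 0 := by
    intro y hy h0
    rw [hAdef] at hy
    simp [h0] at hy
  have hφnorm : ∀ y, (‖φ y‖₊ : ℝ≥0∞) ≤ A.indicator (fun _ => ENNReal.ofReal a⁻¹) y := by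
    intro y
    by_cases hy : y ∈ A
    · rw [hφdef, Set.indicator_of_mem hy, Set.indicator_of_mem hy,
        ← ofReal_norm_eq_coe_nnnorm]
      refine ENNReal.ofReal_le_ofReal ?_
      have hgy : ‖g y‖ ≠ 0 := norm_ne_zero_iff.mpr (hgz y hy)
      simp only [norm_div, norm_mul, Complex.norm_real, RCLike.norm_conj, Real.norm_eq_abs,
        abs_of_nonneg (norm_nonneg (g y)), abs_of_nonneg ha.le]
      rw [div_le_iff₀ (by positivity)]
      field_simp
      exact le_rfl
    · simp [hφdef, Set.indicator_of_notMem hy]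
  have hφ1 : eLpNorm φ 1 μ ≤ 1 := by
    rw [eLpNorm_one_eq_lintegral_nnnorm]
    calc ∫⁻ y, (‖φ y‖₊ : ℝ≥0∞) ∂μ ≤ ∫⁻ y, A.indicator (fun _ => ENNReal.ofReal a⁻¹) y ∂μ :=
          lintegral_mono hφnorm
      _ = ENNReal.ofReal a⁻¹ * μ A := lintegral_indicator_const hAm _
      _ = 1 := by
          rw [hadef, ENNReal.ofReal_inv_of_pos ha, ENNReal.ofReal_toReal hAfin]
          exact ENNReal.inv_mul_cancel hA0 hAfin
  have hmul : ∀ y, g y * φ y = ((A.indicator (fun y => ‖g y‖ * a⁻¹) y : ℝ) : ℂ) := by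
    intro y
    by_cases hy : y ∈ A
    · rw [hφdef, Set.indicator_of_mem hy, Set.indicator_of_mem hy, mul_div_assoc',
        mul_conj_norm]
      have hgy : ‖g y‖ ≠ 0 := norm_ne_zero_iff.mpr (hgz y hy)
      have hd : ((‖g y‖ : ℂ) * (a : ℂ)) ≠ 0 := by
        exact_mod_cast mul_ne_zero (by exact_mod_cast hgy) (by exact_mod_cast ha.ne')
      rw [div_eq_iff hd]
      norm_cast
      field_simp
    · simp [hφdef, Set.indicator_of_notMem hy]
  have hgInt : Integrable g μ :=
    memLp_one_iff_integrable.mp (hgt.mono_exponent le_top)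
  have hint : ∫ y, g y * φ y ∂μ = ((∫ y in A, ‖g y‖ * a⁻¹ ∂μ : ℝ) : ℂ) := by
    calc ∫ y, g y * φ y ∂μ
        = ∫ y, ((A.indicator (fun y => ‖g y‖ * a⁻¹) y : ℝ) : ℂ) ∂μ := by simp only [hmul]
      _ = ((∫ y, A.indicator (fun y => ‖g y‖ * a⁻¹) y ∂μ : ℝ) : ℂ) := integral_ofReal
      _ = _ := by rw [integral_indicator hAm]
  have hlow : c.toReal ≤ ∫ y in A, ‖g y‖ * a⁻¹ ∂μ := by
    have := setIntegral_ge_of_const_le hAm hAfin (c := c.toReal * a⁻¹)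
      (f := fun y => ‖g y‖ * a⁻¹) ?_ ?_
    · calc c.toReal = c.toReal * a⁻¹ * a := by field_simp
        _ ≤ _ := by simp only [smul_eq_mul, measureReal_def, ← hadef] at this; linarith
    · intro y hy
      have h1 : c ≤ (‖g y‖₊ : ℝ≥0∞) := le_of_lt hy
      have h2 : c.toReal ≤ ‖g y‖ := by
        have := ENNReal.toReal_mono (by simp) h1
        simpa using this
      exact mul_le_mul_of_nonneg_right h2 (by positivity)
    · exact (hgInt.norm.mul_const a⁻¹).integrableOn
  have hr0 : (0:ℝ) ≤ ∫ y in A, ‖g y‖ * a⁻¹ ∂μ := le_trans ENNReal.toReal_nonneg hlow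
  calc c = ENNReal.ofReal c.toReal := (ENNReal.ofReal_toReal hctop).symm
    _ ≤ ENNReal.ofReal (∫ y in A, ‖g y‖ * a⁻¹ ∂μ) := ENNReal.ofReal_le_ofReal hlow
    _ = (‖∫ y, g y * φ y ∂μ‖₊ : ℝ≥0∞) := by
        rw [hint, ← ofReal_norm_eq_coe_nnnorm, Complex.norm_real, Real.norm_eq_abs,
          abs_of_nonneg hr0]
    _ ≤ _ := le_iSup₂ (f := fun (ψ : α → ℂ) (_ : Measurable ψ ∧ eLpNorm ψ 1 μ ≤ 1) =>
          (‖∫ y, g y * ψ y ∂μ‖₊ : ℝ≥0∞)) φ ⟨hφm, hφ1⟩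

lemma dual_case_mid [IsProbabilityMeasure μ] {q q' : ℝ≥0∞}
    (hq1 : 1 < q) (hqt : q ≠ ∞) (hqq' : q⁻¹ + q'⁻¹ = 1)
    {g : α → ℂ} (hg : Measurable g) (hgq' : MemLp g q' μ) :
    eLpNorm g q' μ ≤ ⨆ (φ : α → ℂ) (_ : Measurable φ ∧ eLpNorm φ q μ ≤ 1),
      (‖∫ y, g y * φ y ∂μ‖₊ : ℝ≥0∞) := by
  have hq0 : q ≠ 0 := (zero_lt_one.trans hq1).ne'
  have hq'0 : q' ≠ 0 := by
    intro h; rw [h] at hqq'; simp at hqq'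
  have hq't : q' ≠ ∞ := by
    intro h; rw [h] at hqq'; simp at hqq'
    exact hq1.ne' hqq'
  set p : ℝ := q.toReal with hpdef
  set s : ℝ := q'.toReal with hsdef
  have hp1 : 1 < p := by
    rw [hpdef, ← ENNReal.toReal_one]
    exact (ENNReal.toReal_lt_toReal (by simp) hqt).mpr hq1
  have hp0 : 0 < p := zero_lt_one.trans hp1
  have hs0 : 0 < s := ENNReal.toReal_pos hq'0 hq't
  have hps : p⁻¹ + s⁻¹ = 1 := by
    have h1 : (q⁻¹ + q'⁻¹).toReal = 1 := by rw [hqq']; simp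
    rw [ENNReal.toReal_add (by simp [hq0]) (by simp [hq'0])] at h1
    rw [ENNReal.toReal_inv, ENNReal.toReal_inv] at h1
    exact h1
  have hs1 : 1 < s := by
    have hip : 0 < p⁻¹ := by positivity
    have his : s⁻¹ < 1 := by linarith
    have := inv_mul_cancel₀ hs0.ne'
    nlinarith
  have hkey : (s - 1) * p = s := by
    have hps' : s + p = p * s := by
      field_simp at hps
      linarith
    nlinarith
  set N : ℝ≥0∞ := eLpNorm g q' μ with hNdef
  rcases eq_or_ne N 0 with hN0 | hN0
  · rw [hN0]; exact zero_le
  have hNt : N ≠ ∞ := hgq'.eLpNorm_lt_top.ne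
  set c : ℝ := N.toReal with hcdef
  have hc : 0 < c := ENNReal.toReal_pos hN0 hNt
  set I : ℝ≥0∞ := ∫⁻ y, (‖g y‖₊ : ℝ≥0∞) ^ s ∂μ with hIdef
  have hNI : N = I ^ (1/s) := by
    rw [hNdef, eLpNorm_eq_lintegral_rpow_nnnorm hq'0 hq't]
  have hIN : I = N ^ s := by
    rw [hNI, ← ENNReal.rpow_mul, one_div, inv_mul_cancel₀ hs0.ne', ENNReal.rpow_one]
  have hI0 : I ≠ 0 := by
    rw [hIN]
    exact (ENNReal.rpow_pos (zero_lt_iff.mpr hN0) hNt).ne'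
  have hIt : I ≠ ∞ := by
    rw [hIN]
    exact ENNReal.rpow_ne_top_of_nonneg hs0.le hNt
  set φ : α → ℂ := fun y =>
      (starRingEnd ℂ) (g y) * ((‖g y‖ ^ (s-1) : ℝ) : ℂ) / ((‖g y‖ : ℂ) * ((c ^ (s-1) : ℝ) : ℂ))
    with hφdef
  have hφm : Measurable φ := by
    refine Measurable.div ?_ ?_
    · exact (Complex.continuous_conj.measurable.comp hg).mul
        (Complex.measurable_ofReal.comp (hg.norm.pow_const (s-1)))
    · exact (Complex.measurable_ofReal.comp hg.norm).mul measurable_const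
  have hcs : (0:ℝ) < c ^ (s-1) := Real.rpow_pos_of_pos hc _
  have hmul : ∀ y, g y * φ y = ((‖g y‖ ^ s / c ^ (s-1) : ℝ) : ℂ) := by
    intro y
    by_cases h : g y = 0
    · simp [hφdef, h, Real.zero_rpow hs0.ne']
    · have hx : (0:ℝ) < ‖g y‖ := norm_pos_iff.mpr h
      have hd : ((‖g y‖ : ℂ) * ((c ^ (s-1) : ℝ) : ℂ)) ≠ 0 := by
        exact_mod_cast mul_ne_zero (by exact_mod_cast hx.ne') (by exact_mod_cast hcs.ne')
      rw [hφdef]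
      show g y * ((starRingEnd ℂ) (g y) * _ / _) = _
      rw [mul_div_assoc', ← mul_assoc, mul_conj_norm, div_eq_iff hd]
      have e1 : ‖g y‖ ^ s = ‖g y‖ * ‖g y‖ ^ (s-1) := by
        have h2 := Real.rpow_add hx 1 (s-1)
        rw [Real.rpow_one, show (1:ℝ) + (s-1) = s by ring] at h2
        exact h2
      norm_cast
      rw [e1]
      field_simp
  have hφnorm : ∀ y, ‖φ y‖ = ‖g y‖ ^ (s-1) / c ^ (s-1) := by
    intro y
    by_cases h : g y = 0
    · simp [hφdef, h, Real.zero_rpow (by linarith : s - 1 ≠ 0)]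
    · have hx : (0:ℝ) < ‖g y‖ := norm_pos_iff.mpr h
      rw [hφdef]
      simp only [norm_div, norm_mul, Complex.norm_real, RCLike.norm_conj, Real.norm_eq_abs,
        abs_of_nonneg (norm_nonneg (g y)), abs_of_nonneg (Real.rpow_nonneg (norm_nonneg _) _),
        abs_of_nonneg hcs.le]
      rw [mul_div_mul_left _ _ hx.ne']
  have hJ : ∫⁻ y, (‖φ y‖₊ : ℝ≥0∞) ^ p ∂μ = 1 := by
    have hpt : ∀ y, (‖φ y‖₊ : ℝ≥0∞) ^ p = I⁻¹ * (‖g y‖₊ : ℝ≥0∞) ^ s := by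
      intro y
      rw [← ofReal_norm_eq_coe_nnnorm, hφnorm y,
        ENNReal.ofReal_rpow_of_nonneg (by positivity) hp0.le,
        Real.div_rpow (Real.rpow_nonneg (norm_nonneg _) _) hcs.le,
        ← Real.rpow_mul (norm_nonneg _), ← Real.rpow_mul hc.le, hkey,
        ENNReal.ofReal_div_of_pos (Real.rpow_pos_of_pos hc _),
        ← ENNReal.ofReal_rpow_of_nonneg (norm_nonneg _) hs0.le,
        ← ENNReal.ofReal_rpow_of_nonneg hc.le hs0.le,
        ofReal_norm_eq_coe_nnnorm, hcdef, ENNReal.ofReal_toReal hNt, ← hIN,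
        ENNReal.div_eq_inv_mul]
    calc ∫⁻ y, (‖φ y‖₊ : ℝ≥0∞) ^ p ∂μ = ∫⁻ y, I⁻¹ * (‖g y‖₊ : ℝ≥0∞) ^ s ∂μ :=
          lintegral_congr hpt
      _ = I⁻¹ * I := by rw [lintegral_const_mul _ (hg.ennnorm.pow_const s)]
      _ = 1 := ENNReal.inv_mul_cancel hI0 hIt
  have hφq : eLpNorm φ q μ ≤ 1 := by
    rw [eLpNorm_eq_lintegral_rpow_nnnorm hq0 hqt, ← hpdef, hJ, ENNReal.one_rpow]
  have hgs_int : Integrable (fun y => ‖g y‖ ^ s) μ := hgq'.integrable_norm_rpow hq'0 hq't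
  have hIr : ∫ y, ‖g y‖ ^ s ∂μ = c ^ s := by
    have h1 : ENNReal.ofReal (∫ y, ‖g y‖ ^ s ∂μ) = I := by
      rw [ofReal_integral_eq_lintegral_ofReal hgs_int
        (Eventually.of_forall fun y => Real.rpow_nonneg (norm_nonneg _) _)]
      exact lintegral_congr fun y => by
        rw [← ENNReal.ofReal_rpow_of_nonneg (norm_nonneg _) hs0.le, ofReal_norm_eq_coe_nnnorm]
    have h2 : ∫ y, ‖g y‖ ^ s ∂μ = I.toReal := by
      rw [← h1, ENNReal.toReal_ofReal
        (integral_nonneg fun y => Real.rpow_nonneg (norm_nonneg _) _)]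
    rw [h2, hIN, hcdef, ← ENNReal.toReal_rpow]
  have hint : ∫ y, g y * φ y ∂μ = ((c : ℝ) : ℂ) := by
    calc ∫ y, g y * φ y ∂μ = ∫ y, ((‖g y‖ ^ s / c ^ (s-1) : ℝ) : ℂ) ∂μ := by simp only [hmul]
      _ = ((∫ y, ‖g y‖ ^ s / c ^ (s-1) ∂μ : ℝ) : ℂ) := integral_ofReal
      _ = ((c : ℝ) : ℂ) := by
          rw [integral_div, hIr, ← Real.rpow_sub hc, show s - (s-1) = 1 by ring, Real.rpow_one]
  have hval : (‖∫ y, g y * φ y ∂μ‖₊ : ℝ≥0∞) = N := by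
    rw [hint, ← ofReal_norm_eq_coe_nnnorm, Complex.norm_real, Real.norm_eq_abs,
      abs_of_nonneg hc.le, hcdef, ENNReal.ofReal_toReal hNt]
  refine le_trans hval.ge ?_
  exact le_iSup₂ (f := fun (ψ : α → ℂ) (_ : Measurable ψ ∧ eLpNorm ψ q μ ≤ 1) =>
    (‖∫ y, g y * ψ y ∂μ‖₊ : ℝ≥0∞)) φ ⟨hφm, hφq⟩


lemma dual_ge [IsProbabilityMeasure μ] {q q' : ℝ≥0∞} (hq : 1 ≤ q) (hqq' : q⁻¹ + q'⁻¹ = 1)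
    {g : α → ℂ} (hg : Measurable g) (hgq' : MemLp g q' μ) :
    eLpNorm g q' μ ≤ ⨆ (φ : α → ℂ) (_ : Measurable φ ∧ eLpNorm φ q μ ≤ 1),
      (‖∫ y, g y * φ y ∂μ‖₊ : ℝ≥0∞) := by
  rcases eq_or_lt_of_le hq with hq1 | hq1
  · have hqone : q = 1 := hq1.symm
    subst hqone
    rw [inv_one] at hqq'
    have h0 : q'⁻¹ = 0 :=
      (ENNReal.add_right_inj (a := (1:ℝ≥0∞)) (by norm_num)).mp
        (by rw [add_zero]; exact hqq')
    have hq'top : q' = ∞ := ENNReal.inv_eq_zero.mp h0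
    subst hq'top
    exact dual_case_one μ hg hgq'
  · rcases eq_or_ne q ∞ with hqt | hqt
    · subst hqt
      have h1 : q'⁻¹ = 1 := by simpa using hqq'
      have hq'1 : q' = 1 := by
        rw [← inv_inv q', h1, inv_one]
      subst hq'1
      exact dual_case_top μ hg hgq'
    · exact dual_case_mid μ hq1 hqt hqq' hg hgq'

end Helpers


/-- Proposition 4.2 of the paper. Let `Ω¹, Ω²` be compact subsets of
`ℝ^d` with probability measures `μ₁, μ₂`, `1 ≤ q ≤ ∞`, `q'` the conjugate exponent of `q`,
and `K` a measurable kernel with `K(z,·) ∈ L_{q'}(μ₂)` for all `z`.  Then the linear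
sampling recovery error of `W^K_q` in the uniform norm equals the infimum over points
`ξ¹,…,ξ^m ∈ Ω¹` and functions `ψ₁,…,ψ_m` of
`sup_{x∈Ω¹} ‖K(x,·) − ∑_j ψ_j(x)K(ξ^j,·)‖_{L_{q'}(μ₂)}`. -/
theorem statement10 (d : ℕ) (Ω₁ Ω₂ : Set (Fin d → ℝ))
    (hΩ₁ : IsCompact Ω₁) (hΩ₂ : IsCompact Ω₂)
    (μ₁ : Measure Ω₁) (μ₂ : Measure Ω₂)
    [IsProbabilityMeasure μ₁] [IsProbabilityMeasure μ₂]
    (q q' : ℝ≥0∞) (hq : 1 ≤ q) (hq' : q⁻¹ + q'⁻¹ = 1)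
    (K : Ω₁ → Ω₂ → ℂ) (hK : Measurable (Function.uncurry K))
    (hKq' : ∀ z : Ω₁, MemLp (fun y => K z y) q' μ₂)
    (m : ℕ) :
    (⨅ (ξ : Fin m → Ω₁) (Φ : (Fin m → ℂ) →ₗ[ℂ] (Ω₁ → ℂ)),
      ⨆ f ∈ {f : Ω₁ → ℂ | ∃ φ : Ω₂ → ℂ, Measurable φ ∧ eLpNorm φ q μ₂ ≤ 1 ∧
               ∀ x : Ω₁, f x = ∫ y, K x y * φ y ∂μ₂},
        ⨆ x : Ω₁, (‖f x - Φ (fun j => f (ξ j)) x‖₊ : ℝ≥0∞)) =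
    ⨅ (ξ : Fin m → Ω₁) (ψ : Fin m → Ω₁ → ℂ),
      ⨆ x : Ω₁, eLpNorm (fun y => K x y - ∑ j, ψ j x * K (ξ j) y) q' μ₂ := by
  have hKm : ∀ z : Ω₁, Measurable (fun y => K z y) := fun z =>
    hK.comp (measurable_prodMk_left)
  -- the key integral identity
  have key : ∀ (ξ : Fin m → Ω₁) (ψ : Fin m → Ω₁ → ℂ) (φ : Ω₂ → ℂ), MemLp φ q μ₂ →
      ∀ x : Ω₁, (∫ y, K x y * φ y ∂μ₂) - ∑ j, ψ j x * ∫ y, K (ξ j) y * φ y ∂μ₂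
        = ∫ y, (K x y - ∑ j, ψ j x * K (ξ j) y) * φ y ∂μ₂ := by
    intro ξ ψ φ hφ x
    have hInt : ∀ z : Ω₁, Integrable (fun y => K z y * φ y) μ₂ :=
      fun z => integrable_mul_helper μ₂ hq' (hKq' z) hφ
    have h1 : ∀ j ∈ Finset.univ (α := Fin m),
        Integrable (fun y => ψ j x * (K (ξ j) y * φ y)) μ₂ :=
      fun j _ => (hInt (ξ j)).const_mul _
    rw [eq_comm]
    calc ∫ y, (K x y - ∑ j, ψ j x * K (ξ j) y) * φ y ∂μ₂
        = ∫ y, (K x y * φ y - ∑ j, ψ j x * (K (ξ j) y * φ y)) ∂μ₂ := by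
          congr 1
          funext y
          rw [sub_mul, Finset.sum_mul]
          congr 1
          exact Finset.sum_congr rfl fun j _ => mul_assoc _ _ _
      _ = (∫ y, K x y * φ y ∂μ₂) - ∫ y, ∑ j, ψ j x * (K (ξ j) y * φ y) ∂μ₂ :=
          integral_sub (hInt x) (integrable_finset_sum _ h1)
      _ = _ := by
          rw [integral_finset_sum _ h1]
          congr 1
          exact Finset.sum_congr rfl fun j _ => integral_const_mul _ _
  have hgmeas : ∀ (ξ : Fin m → Ω₁) (ψ : Fin m → Ω₁ → ℂ) (x : Ω₁),
      Measurable (fun y => K x y - ∑ j, ψ j x * K (ξ j) y) := by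
    intro ξ ψ x
    exact (hKm x).sub (Finset.measurable_sum _ fun j _ => (hKm (ξ j)).const_mul _)
  have hgmem : ∀ (ξ : Fin m → Ω₁) (ψ : Fin m → Ω₁ → ℂ) (x : Ω₁),
      MemLp (fun y => K x y - ∑ j, ψ j x * K (ξ j) y) q' μ₂ := by
    intro ξ ψ x
    exact (hKq' x).sub (memLp_finset_sum _ fun j _ => (hKq' (ξ j)).const_mul _)
  apply le_antisymm
  · -- sampling error ≤ kernel approximation
    refine le_iInf fun ξ => le_iInf fun ψ => ?_
    set Φ : (Fin m → ℂ) →ₗ[ℂ] (Ω₁ → ℂ) :=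
      { toFun := fun c => fun x => ∑ j, c j * ψ j x
        map_add' := by
          intro c₁ c₂
          funext x
          simp [add_mul, Finset.sum_add_distrib]
        map_smul' := by
          intro r c
          funext x
          simp [Finset.mul_sum, mul_assoc] } with hΦdef
    refine le_trans (iInf₂_le ξ Φ) ?_
    refine iSup₂_le fun f hf => iSup_le fun x => ?_
    obtain ⟨φ, hφm, hφn, hfeq⟩ := hf
    have hφmem : MemLp φ q μ₂ :=
      ⟨hφm.aestronglyMeasurable, lt_of_le_of_lt hφn ENNReal.one_lt_top⟩
    have hΦapp : Φ (fun j => f (ξ j)) x = ∑ j, ψ j x * ∫ y, K (ξ j) y * φ y ∂μ₂ := by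
      show ∑ j, f (ξ j) * ψ j x = _
      exact Finset.sum_congr rfl fun j _ => by rw [hfeq (ξ j), mul_comm]
    have e : f x - Φ (fun j => f (ξ j)) x
        = ∫ y, (K x y - ∑ j, ψ j x * K (ξ j) y) * φ y ∂μ₂ := by
      rw [hΦapp, hfeq x]
      exact key ξ ψ φ hφmem x
    calc (‖f x - Φ (fun j => f (ξ j)) x‖₊ : ℝ≥0∞)
        ≤ eLpNorm (fun y => K x y - ∑ j, ψ j x * K (ξ j) y) q' μ₂ * eLpNorm φ q μ₂ := by
          rw [e]
          exact holder_bound μ₂ hq' (hgmeas ξ ψ x).aestronglyMeasurable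
            hφm.aestronglyMeasurable
      _ ≤ eLpNorm (fun y => K x y - ∑ j, ψ j x * K (ξ j) y) q' μ₂ * 1 :=
          mul_le_mul_right hφn _
      _ = eLpNorm (fun y => K x y - ∑ j, ψ j x * K (ξ j) y) q' μ₂ := mul_one _
      _ ≤ _ := le_iSup (fun x => eLpNorm (fun y => K x y - ∑ j, ψ j x * K (ξ j) y) q' μ₂) x
  · -- kernel approximation ≤ sampling error
    refine le_iInf fun ξ => le_iInf fun Φ => ?_
    set ψ : Fin m → Ω₁ → ℂ := fun i => Φ (fun j => if i = j then 1 else 0) with hψdef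
    refine le_trans (iInf₂_le ξ ψ) ?_
    refine iSup_le fun x => ?_
    refine le_trans (dual_ge μ₂ hq hq' (hgmeas ξ ψ x) (hgmem ξ ψ x)) ?_
    refine iSup₂_le fun φ hφ => ?_
    obtain ⟨hφm, hφn⟩ := hφ
    have hφmem : MemLp φ q μ₂ :=
      ⟨hφm.aestronglyMeasurable, lt_of_le_of_lt hφn ENNReal.one_lt_top⟩
    set f : Ω₁ → ℂ := fun x => ∫ y, K x y * φ y ∂μ₂ with hfdef
    have hf : f ∈ {f : Ω₁ → ℂ | ∃ φ : Ω₂ → ℂ, Measurable φ ∧ eLpNorm φ q μ₂ ≤ 1 ∧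
        ∀ x : Ω₁, f x = ∫ y, K x y * φ y ∂μ₂} := ⟨φ, hφm, hφn, fun _ => rfl⟩
    have hΦapp : Φ (fun j => f (ξ j)) x = ∑ j, f (ξ j) * ψ j x := by
      rw [LinearMap.pi_apply_eq_sum_univ Φ (fun j => f (ξ j))]
      simp [hψdef]
    have e : ∫ y, (K x y - ∑ j, ψ j x * K (ξ j) y) * φ y ∂μ₂
        = f x - Φ (fun j => f (ξ j)) x := by
      rw [hΦapp, ← key ξ ψ φ hφmem x, hfdef]
      simp only []
      congr 1
      exact Finset.sum_congr rfl fun j _ => mul_comm _ _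
    refine le_trans ?_ (le_iSup₂ (f := fun (f : Ω₁ → ℂ)
      (_ : f ∈ {f : Ω₁ → ℂ | ∃ φ : Ω₂ → ℂ, Measurable φ ∧ eLpNorm φ q μ₂ ≤ 1 ∧
        ∀ x : Ω₁, f x = ∫ y, K x y * φ y ∂μ₂}) =>
      ⨆ x : Ω₁, (‖f x - Φ (fun j => f (ξ j)) x‖₊ : ℝ≥0∞)) f hf)
    refine le_trans (le_of_eq (by rw [e])) ?_
    exact le_iSup (fun x : Ω₁ => (‖f x - Φ (fun j => f (ξ j)) x‖₊ : ℝ≥0∞)) x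



end
end

section
/- Let n ≥ 1 and let I_n be the trigonometric interpolation operator I_n(f)(x) := (2n+1)^{-1}∑_{j=0}^{2n} f(x^j)𝒟_n(x − x^j) with nodes x^j := 2πj/(2n+1), where 𝒟_n is the Dirichlet kernel. There exists an absolute constant C such that for every continuous 2π-periodic function f, ‖f − I_n(f)‖_∞ ≤ C·ln(n+1)·E_n(f)_∞, where E_n(f)_∞ := inf{‖f − t‖_∞ : t a trigonometric polynomial of degree ≤ n}. -/
open MeasureTheory Filter Finset
open scoped ENNReal NNReal

noncomputable section

/-- Normalized Lebesgue measure on one period of the torus `𝕋 = ℝ/(2πℤ)`. -/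
def μT : Measure ℝ :=
  (ENNReal.ofReal (2 * Real.pi))⁻¹ • (MeasureTheory.volume.restrict (Set.Ioc 0 (2 * Real.pi)))

/-- `L_p` norm (with values in `ℝ≥0∞`) with respect to the normalized measure on the torus. -/
def lpNorm (p : ℝ≥0∞) (f : ℝ → ℂ) : ℝ≥0∞ := eLpNorm f p μT

/-- Mixed (vector) norm `‖f‖_{p₁,p₂}` : first the `L_{p₁}` norm in the first variable,
then the `L_{p₂}` norm in the second variable. -/
def lpNorm2 (p₁ p₂ : ℝ≥0∞) (f : ℝ → ℝ → ℂ) : ℝ≥0∞ :=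
  eLpNorm (fun y => (eLpNorm (fun x => f x y) p₁ μT).toReal) p₂ μT

/-- The Bernoulli kernel `F_a(x) = 1 + 2∑_{k≥1} k^{-a} cos(kx - aπ/2)`, the series being
interpreted as the limit of its partial sums. -/
def bern (a : ℝ) (x : ℝ) : ℝ :=
  1 + 2 * limUnder atTop (fun N : ℕ =>
    ∑ k ∈ Finset.range N, ((k : ℝ) + 1) ^ (-a) * Real.cos (((k : ℝ) + 1) * x - a * Real.pi / 2))

/-- The generalized Bernoulli kernel `F_{a,α}(x) = 1 + 2∑_{k≥1} k^{-a} cos(kx - απ/2)`. -/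
def bernGen (a α : ℝ) (x : ℝ) : ℝ :=
  1 + 2 * limUnder atTop (fun N : ℕ =>
    ∑ k ∈ Finset.range N, ((k : ℝ) + 1) ^ (-a) * Real.cos (((k : ℝ) + 1) * x - α * Real.pi / 2))

/-- Two-variable class `W^{(r₁,r₂)}_{(q₁,q₂)}` : normalized convolutions of the product
Bernoulli kernel `F_{r₁}(x)F_{r₂}(y)` with functions `φ` with `‖φ‖_{q₁,q₂} ≤ 1`. -/
def Wcl (r₁ r₂ : ℝ) (q₁ q₂ : ℝ≥0∞) : Set (ℝ → ℝ → ℂ) :=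
  {K | ∃ φ : ℝ → ℝ → ℂ, Measurable (Function.uncurry φ) ∧ lpNorm2 q₁ q₂ φ ≤ 1 ∧
        ∀ x y, K x y = ∫ u, (∫ v, ((bern r₁ (x - u) * bern r₂ (y - v) : ℝ) : ℂ) * φ u v ∂μT) ∂μT}

/-- `l`-th finite difference with step `t` in the first variable. -/
def mdiff1 (l : ℕ) (t : ℝ) (f : ℝ → ℝ → ℂ) : ℝ → ℝ → ℂ :=
  fun x y => ∑ i ∈ Finset.range (l + 1),
    ((-1 : ℂ)) ^ (l - i) * (Nat.choose l i : ℂ) * f (x + (i : ℝ) * t) y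

/-- `l`-th finite difference with step `t` in the second variable. -/
def mdiff2 (l : ℕ) (t : ℝ) (f : ℝ → ℝ → ℂ) : ℝ → ℝ → ℂ :=
  fun x y => ∑ i ∈ Finset.range (l + 1),
    ((-1 : ℂ)) ^ (l - i) * (Nat.choose l i : ℂ) * f x (y + (i : ℝ) * t)

/-- Two-variable class `H^{(r₁,r₂)}_{(q₁,q₂)}` defined via mixed `l`-th differences. -/
def Hcl (l : ℕ) (r₁ r₂ : ℝ) (q₁ q₂ : ℝ≥0∞) : Set (ℝ → ℝ → ℂ) :=
  {f | Measurable (Function.uncurry f) ∧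
       (∀ x y, f (x + 2 * Real.pi) y = f x y ∧ f x (y + 2 * Real.pi) = f x y) ∧
       lpNorm2 q₁ q₂ f ≤ 1 ∧
       (∀ t₁ : ℝ, lpNorm2 q₁ q₂ (mdiff1 l t₁ f) ≤ ENNReal.ofReal (|t₁| ^ r₁)) ∧
       (∀ t₂ : ℝ, lpNorm2 q₁ q₂ (mdiff2 l t₂ f) ≤ ENNReal.ofReal (|t₂| ^ r₂)) ∧
       (∀ t₁ t₂ : ℝ, lpNorm2 q₁ q₂ (mdiff1 l t₁ (mdiff2 l t₂ f)) ≤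
          ENNReal.ofReal (|t₁| ^ r₁ * |t₂| ^ r₂))}

/-- The class `W^K_q` associated with a kernel `K(x,y)` on the torus. -/
def WK (K : ℝ → ℝ → ℂ) (q : ℝ≥0∞) : Set (ℝ → ℂ) :=
  {f | ∃ φ : ℝ → ℂ, Measurable φ ∧ lpNorm q φ ≤ 1 ∧ ∀ x, f x = ∫ y, K x y * φ y ∂μT}

/-- Error of optimal linear sampling recovery `ϱ_m(F, L_p)`. -/
def sampErr (m : ℕ) (F : Set (ℝ → ℂ)) (p : ℝ≥0∞) : ℝ≥0∞ :=
  ⨅ (ξ : Fin m → ℝ) (Φ : (Fin m → ℂ) →ₗ[ℂ] (ℝ → ℂ)),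
    ⨆ f ∈ F, lpNorm p (fun x => f x - Φ (fun j => f (ξ j)) x)

/-- Error of optimal (nonlinear) sampling recovery `ϱ_m^o(F, L_p)`. -/
def sampErrO (m : ℕ) (F : Set (ℝ → ℂ)) (p : ℝ≥0∞) : ℝ≥0∞ :=
  ⨅ (ξ : Fin m → ℝ) (Φ : (Fin m → ℂ) → (ℝ → ℂ)),
    ⨆ f ∈ F, lpNorm p (fun x => f x - Φ (fun j => f (ξ j)) x)

/-- Best `m`-term approximation `σ_m(K, 𝓛𝓚(p₁,p₂))_{p₁,p₂}` of a kernel `K` with respect to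
the adaptive system `𝓛𝓚`, in the vector norm `‖·‖_{p₁,p₂}`. -/
def sigmaLK (m : ℕ) (K : ℝ → ℝ → ℂ) (p₁ p₂ : ℝ≥0∞) : ℝ≥0∞ :=
  ⨅ (ξ : Fin m → ℝ) (ψ : Fin m → ℝ → ℂ),
    lpNorm2 p₁ p₂ (fun x y => K x y - ∑ j, ψ j x * K (ξ j) y)

/-- The Fejér kernel `𝒦_j`. -/
def fejer (j : ℕ) (x : ℝ) : ℂ :=
  ∑ k ∈ Finset.Icc (-(j : ℤ)) (j : ℤ),
    ((1 - |(k : ℝ)| / (j : ℝ) : ℝ) : ℂ) * Complex.exp ((k : ℂ) * (x : ℂ) * Complex.I)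

/-- The de la Vallée Poussin kernel `𝒱_n = 2𝒦_{2n} - 𝒦_n`. -/
def vallee (n : ℕ) (x : ℝ) : ℂ := 2 * fejer (2 * n) x - fejer n x

/-- The kernel `𝒟^{(a,α)}_{2n}(x) = 1 + 2∑_{k=1}^{2n} k^a cos(kx + απ/2)`. -/
def DkerD (n : ℕ) (a α : ℝ) (x : ℝ) : ℝ :=
  1 + 2 * ∑ k ∈ Finset.Icc 1 (2 * n), (k : ℝ) ^ a * Real.cos ((k : ℝ) * x + α * Real.pi / 2)

/-- The operator `I^{(a,α)}g = F_{a,α} ∗ g` (normalized convolution on the torus). -/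
def Iop (a α : ℝ) (g : ℝ → ℂ) (x : ℝ) : ℂ := ∫ z, ((bernGen a α (x - z) : ℝ) : ℂ) * g z ∂μT

/-- The operator `D^{(a,α)}g = 𝒟^{(a,α)}_{2n} ∗ g` (normalized convolution on the torus). -/
def Dop (n : ℕ) (a α : ℝ) (g : ℝ → ℂ) (x : ℝ) : ℂ :=
  ∫ z, ((DkerD n a α (x - z) : ℝ) : ℂ) * g z ∂μT

/-- `D^{(a,α)}` acting in the first variable of a function of two variables. -/
def Dop1 (n : ℕ) (a α : ℝ) (h : ℝ → ℝ → ℂ) (x y : ℝ) : ℂ :=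
  ∫ z, ((DkerD n a α (x - z) : ℝ) : ℂ) * h z y ∂μT

/-- `D^{(b,β)}` acting in the second variable of a function of two variables. -/
def Dop2 (n : ℕ) (b β : ℝ) (h : ℝ → ℝ → ℂ) (x y : ℝ) : ℂ :=
  ∫ z, ((DkerD n b β (y - z) : ℝ) : ℂ) * h x z ∂μT

/-- Trigonometric polynomials of degree at most `N`. -/
def TrigPoly (N : ℕ) : Set (ℝ → ℂ) :=
  {g | ∃ c : ℤ → ℂ, ∀ x : ℝ, g x =
    ∑ k ∈ Finset.Icc (-(N : ℤ)) (N : ℤ), c k * Complex.exp ((k : ℂ) * (x : ℂ) * Complex.I)}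

/-- The Dirichlet kernel `𝒟_n`. -/
def dirich (n : ℕ) (x : ℝ) : ℂ :=
  ∑ k ∈ Finset.Icc (-(n : ℤ)) (n : ℤ), Complex.exp ((k : ℂ) * (x : ℂ) * Complex.I)

/-- The interpolation operator `I_n` with nodes `x^j = 2πj/(2n+1)`. -/
def interp (n : ℕ) (f : ℝ → ℂ) (x : ℝ) : ℂ :=
  ((2 * (n : ℝ) + 1))⁻¹ * ∑ j ∈ Finset.range (2 * n + 1),
    f (2 * Real.pi * (j : ℝ) / (2 * (n : ℝ) + 1)) *
      dirich n (x - 2 * Real.pi * (j : ℝ) / (2 * (n : ℝ) + 1))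

/-- The uniform norm (as an `ℝ≥0∞`-valued supremum). -/
def supNorm (f : ℝ → ℂ) : ℝ≥0∞ := ⨆ x : ℝ, (‖f x‖₊ : ℝ≥0∞)

/-- Univariate class `W^r_q` defined via the Bernoulli kernel `F_r`. -/
def Wuniv (r : ℝ) (q : ℝ≥0∞) : Set (ℝ → ℂ) :=
  {f | ∃ φ : ℝ → ℂ, Measurable φ ∧ lpNorm q φ ≤ 1 ∧
        ∀ x, f x = ∫ z, ((bern r (x - z) : ℝ) : ℂ) * φ z ∂μT}

section Aux16

open Real


lemma exp_sub_one_abs (x : ℝ) :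
    ‖Complex.exp ((x:ℂ)*Complex.I) - 1‖ = 2 * |Real.sin (x/2)| := by
  have h1 : Complex.exp ((x:ℂ)*Complex.I) - 1
      = Complex.exp (((x/2:ℝ):ℂ)*Complex.I) *
        (Complex.exp (((x/2:ℝ):ℂ)*Complex.I) - Complex.exp (-((x/2:ℝ):ℂ)*Complex.I)) := by
    rw [mul_sub, ← Complex.exp_add, ← Complex.exp_add]
    push_cast
    ring_nf
    rw [Complex.exp_zero]; ring
  have h2 : Complex.exp (((x/2:ℝ):ℂ)*Complex.I) - Complex.exp (-((x/2:ℝ):ℂ)*Complex.I)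
      = 2*Complex.I*Complex.sin (x/2 : ℝ) := by
    rw [Complex.sin]; field_simp; ring_nf; simp [Complex.I_sq]; ring
  rw [h1, h2, norm_mul, Complex.norm_exp_ofReal_mul_I, one_mul, norm_mul, norm_mul,
    Complex.norm_two, Complex.norm_I, ← Complex.ofReal_sin, Complex.norm_real, Real.norm_eq_abs]
  ring




lemma dirich_eq (n : ℕ) (x : ℝ) :
    dirich n x = (Complex.exp ((x:ℂ)*Complex.I))^(-(n:ℤ)) *
      ∑ j ∈ range (2*n+1), (Complex.exp ((x:ℂ)*Complex.I))^j := by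
  set w := Complex.exp ((x:ℂ)*Complex.I) with hw
  have hw0 : w ≠ 0 := Complex.exp_ne_zero _
  have hterm : ∀ k : ℤ, Complex.exp ((k : ℂ) * (x : ℂ) * Complex.I) = w ^ k := by
    intro k; rw [hw, ← Complex.exp_int_mul]; ring_nf
  rw [dirich]
  simp_rw [hterm]
  rw [mul_sum]
  refine Finset.sum_nbij' (fun k => (k + n).toNat) (fun j => (j:ℤ) - n) ?_ ?_ ?_ ?_ ?_
  · intro k hk; simp only [mem_Icc] at hk; simp only [mem_range]; omega
  · intro j hj; simp only [mem_range] at hj; simp only [mem_Icc]; omega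
  · intro k hk; simp only [mem_Icc] at hk; simp; omega
  · intro j hj; simp only [mem_range] at hj; simp
  · intro k hk
    simp only [mem_Icc] at hk
    have : ((k + n).toNat : ℤ) = k + n := by omega
    rw [← zpow_natCast w ((k+n).toNat), this, ← zpow_add₀ hw0]
    ring_nf

lemma norm_dirich_le (n : ℕ) (x : ℝ) : ‖dirich n x‖ ≤ 2*(n:ℝ)+1 := by
  rw [dirich]
  calc ‖∑ k ∈ Finset.Icc (-(n : ℤ)) (n : ℤ), Complex.exp ((k : ℂ) * (x : ℂ) * Complex.I)‖
      ≤ ∑ k ∈ Finset.Icc (-(n : ℤ)) (n : ℤ), ‖Complex.exp ((k : ℂ) * (x : ℂ) * Complex.I)‖ := by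
        exact norm_sum_le _ _
    _ = ∑ k ∈ Finset.Icc (-(n : ℤ)) (n : ℤ), 1 := by
        refine Finset.sum_congr rfl fun k _ => ?_
        have : ((k:ℂ) * (x:ℂ) * Complex.I) = ((k*x : ℝ) : ℂ) * Complex.I := by push_cast; ring
        rw [this, Complex.norm_exp_ofReal_mul_I]
    _ = 2*(n:ℝ)+1 := by
        have hc : (Finset.Icc (-(n:ℤ)) (n:ℤ)).card = 2*n+1 := by
          rw [Int.card_Icc]; omega
        rw [Finset.sum_const, hc, nsmul_eq_mul, mul_one]
        push_cast; ring

lemma dirich_periodic (n : ℕ) : Function.Periodic (dirich n) (2*Real.pi) := by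
  intro x
  unfold dirich
  refine Finset.sum_congr rfl fun k _ => ?_
  push_cast
  rw [mul_add, add_mul, Complex.exp_add, mul_assoc ((k:ℂ)) (2*(Real.pi:ℂ)) Complex.I,
    Complex.exp_int_mul_two_pi_mul_I, mul_one]

lemma norm_dirich_le_inv_sin (n : ℕ) {x : ℝ} (hx : 0 < Real.sin (x/2)) :
    ‖dirich n x‖ ≤ 1 / Real.sin (x/2) := by
  set w := Complex.exp ((x:ℂ)*Complex.I) with hw
  have hw0 : w ≠ 0 := Complex.exp_ne_zero _
  have hw1 : w ≠ 1 := by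
    intro h
    rw [hw, Complex.exp_eq_one_iff] at h
    obtain ⟨k, hk⟩ := h
    have hx2 : x = k * (2*Real.pi) := by
      have := congrArg Complex.im hk
      simpa using this
    rw [hx2] at hx
    have : (k:ℝ) * (2*Real.pi) / 2 = k * Real.pi := by ring
    rw [this, Real.sin_int_mul_pi] at hx
    exact lt_irrefl _ hx
  have habsw : ‖w‖ = 1 := Complex.norm_exp_ofReal_mul_I x
  rw [dirich_eq, geom_sum_eq hw1]
  rw [norm_mul, norm_zpow, habsw, one_zpow, one_mul, norm_div]
  have hden : ‖w - 1‖ = 2 * Real.sin (x/2) := by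
    rw [hw, exp_sub_one_abs, abs_of_pos hx]
  rw [hden]
  have hnum : ‖w^(2*n+1) - 1‖ ≤ 2 := by
    calc ‖w^(2*n+1) - 1‖ ≤ ‖w^(2*n+1)‖ + ‖(1:ℂ)‖ := by
          exact norm_sub_le _ _
      _ = 2 := by rw [norm_pow, habsw, one_pow, norm_one]; norm_num
  rw [div_le_div_iff₀ (by positivity) hx]
  calc ‖w ^ (2 * n + 1) - 1‖ * Real.sin (x/2) ≤ 2 * Real.sin (x/2) := by
        exact mul_le_mul_of_nonneg_right hnum hx.le
    _ = 1 * (2 * Real.sin (x / 2)) := by ring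


lemma roots_sum (m : ℕ) (hm : 0 < m) (d : ℤ) (hd : d.natAbs < m) :
    ∑ j ∈ range m, Complex.exp ((d:ℂ) * ((2*Real.pi*(j:ℝ)/m : ℝ):ℂ) * Complex.I)
      = if d = 0 then (m:ℂ) else 0 := by
  set ω : ℂ := Complex.exp (((d:ℂ) * (2*(Real.pi:ℂ)) / m) * Complex.I) with hω
  have hterm : ∀ j ∈ range m,
      Complex.exp ((d:ℂ) * ((2*Real.pi*(j:ℝ)/m : ℝ):ℂ) * Complex.I) = ω ^ j := by
    intro j _
    rw [hω, ← Complex.exp_nat_mul]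
    congr 1
    push_cast
    have hm0 : ((m:ℂ)) ≠ 0 := by exact_mod_cast hm.ne'
    field_simp
  rw [Finset.sum_congr rfl hterm]
  by_cases hd0 : d = 0
  · subst hd0
    simp [hω]
  · rw [if_neg hd0]
    have hm0 : ((m:ℝ)) ≠ 0 := by exact_mod_cast hm.ne'
    have hω1 : ω ≠ 1 := by
      intro h
      rw [hω, Complex.exp_eq_one_iff] at h
      obtain ⟨k, hk⟩ := h
      have him := congrArg Complex.im hk
      simp [Complex.mul_I_im, Complex.mul_I_re] at him
      -- him : (d * (2π) / m).re = k * (2π)  roughly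
      have heq : (d:ℝ) * (2*Real.pi) / m = k * (2*Real.pi) := by
        push_cast at him ⊢
        linarith [him]
      field_simp at heq
      have h2 : (d:ℝ) * (2*Real.pi) = ((k:ℝ)*(m:ℝ)) * (2*Real.pi) := by
        rw [heq]; ring
      have h3 : (d:ℝ) = (k:ℝ) * (m:ℝ) := mul_right_cancel₀ (by positivity) h2
      have h4 : d = k * m := by exact_mod_cast h3
      have hd0' : d ≠ 0 := hd0
      have : d.natAbs = k.natAbs * m := by
        rw [h4, Int.natAbs_mul, Int.natAbs_natCast]
      have hk0 : k.natAbs ≠ 0 := by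
        intro hh; apply hd0'; rw [h4]; simp [Int.natAbs_eq_zero.mp hh]
      have hge : m ≤ d.natAbs := by
        rw [this]; exact Nat.le_mul_of_pos_left m (Nat.pos_of_ne_zero hk0)
      omega
    have hωm : ω ^ m = 1 := by
      rw [hω, ← Complex.exp_nat_mul]
      have hm0' : ((m:ℂ)) ≠ 0 := by exact_mod_cast hm.ne'
      have : (m:ℂ) * ((d:ℂ) * (2*(Real.pi:ℂ)) / m * Complex.I) = (d:ℂ) * (2*(Real.pi:ℂ)*Complex.I) := by
        field_simp
      rw [this, Complex.exp_int_mul_two_pi_mul_I]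
    rw [geom_sum_eq hω1, hωm]
    simp






lemma interp_exp (n : ℕ) (k : ℤ) (hk : k ∈ Finset.Icc (-(n:ℤ)) (n:ℤ)) (x : ℝ) :
    interp n (fun y => Complex.exp ((k:ℂ)*(y:ℂ)*Complex.I)) x
      = Complex.exp ((k:ℂ)*(x:ℂ)*Complex.I) := by
  simp only [Finset.mem_Icc] at hk
  have hmr : ((2*n+1 : ℕ) : ℝ) = 2*(n:ℝ)+1 := by push_cast; ring
  unfold interp dirich
  have hstep : ∀ j ∈ Finset.range (2*n+1),
      Complex.exp ((k:ℂ) * ((2 * Real.pi * (j:ℝ) / (2*(n:ℝ)+1) : ℝ):ℂ) * Complex.I) *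
        ∑ l ∈ Finset.Icc (-(n:ℤ)) (n:ℤ),
          Complex.exp ((l:ℂ) * ((x - 2 * Real.pi * (j:ℝ) / (2*(n:ℝ)+1) : ℝ):ℂ) * Complex.I)
      = ∑ l ∈ Finset.Icc (-(n:ℤ)) (n:ℤ),
          Complex.exp ((l:ℂ) * (x:ℂ) * Complex.I) *
            Complex.exp (((k - l : ℤ):ℂ) * ((2*Real.pi*(j:ℝ)/((2*n+1:ℕ):ℝ) : ℝ):ℂ) * Complex.I) := by
    intro j _
    rw [Finset.mul_sum]
    refine Finset.sum_congr rfl fun l _ => ?_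
    rw [← Complex.exp_add, ← Complex.exp_add]
    congr 1
    rw [hmr]
    push_cast
    ring
  rw [Finset.sum_congr rfl hstep, Finset.sum_comm]
  have hinner : ∀ l ∈ Finset.Icc (-(n:ℤ)) (n:ℤ),
      ∑ j ∈ Finset.range (2*n+1),
        Complex.exp ((l:ℂ) * (x:ℂ) * Complex.I) *
          Complex.exp (((k - l : ℤ):ℂ) * ((2*Real.pi*(j:ℝ)/((2*n+1:ℕ):ℝ) : ℝ):ℂ) * Complex.I)
      = if l = k then Complex.exp ((l:ℂ) * (x:ℂ) * Complex.I) * ((2*n+1 : ℕ):ℂ) else 0 := by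
    intro l hl
    simp only [Finset.mem_Icc] at hl
    rw [← Finset.mul_sum, roots_sum (2*n+1) (by omega) (k - l) (by omega)]
    by_cases h : l = k
    · subst h; simp
    · rw [if_neg (by omega), if_neg h, mul_zero]
  rw [Finset.sum_congr rfl hinner, Finset.sum_ite_eq' (Finset.Icc (-(n:ℤ)) (n:ℤ)) k
    (fun l => Complex.exp ((l:ℂ) * (x:ℂ) * Complex.I) * ((2*n+1 : ℕ):ℂ)),
    if_pos (by simp only [Finset.mem_Icc]; omega)]
  have hc : (2*(n:ℂ)+1) ≠ 0 := by
    have h1 : ((2*n+1:ℕ):ℂ) ≠ 0 := Nat.cast_ne_zero.mpr (by omega)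
    push_cast at h1
    intro h; exact h1 (by linear_combination h)
  push_cast
  field_simp

lemma interp_trig (n : ℕ) {t : ℝ → ℂ} (ht : t ∈ TrigPoly n) (x : ℝ) :
    interp n t x = t x := by
  obtain ⟨c, hc⟩ := ht
  conv_rhs => rw [hc x]
  have : interp n t x = ∑ k ∈ Finset.Icc (-(n:ℤ)) (n:ℤ), c k *
      interp n (fun y => Complex.exp ((k:ℂ)*(y:ℂ)*Complex.I)) x := by
    unfold interp
    simp_rw [hc, Finset.sum_mul, Finset.mul_sum]
    rw [Finset.sum_comm]
    refine Finset.sum_congr rfl fun k _ => ?_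
    refine Finset.sum_congr rfl fun j _ => ?_
    ring
  rw [this]
  refine Finset.sum_congr rfl fun k hk => ?_
  rw [interp_exp n k hk x]


-- (A) Jordan-type bound
lemma sin_half_ge {u : ℝ} (h1 : 0 < u) (h2 : u < 2*Real.pi) :
    min u (2*Real.pi - u) / Real.pi ≤ Real.sin (u/2) := by
  rcases le_or_gt u Real.pi with h | h
  · have := Real.mul_le_sin (x := u/2) (by linarith) (by linarith)
    have hmin : min u (2*Real.pi - u) ≤ u := min_le_left _ _
    have hpi := Real.pi_pos
    rw [div_le_iff₀ hpi] at *
    calc min u (2*Real.pi - u) ≤ u := hmin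
      _ = (2 / Real.pi * (u/2)) * Real.pi := by field_simp
      _ ≤ Real.sin (u/2) * Real.pi := by
          exact mul_le_mul_of_nonneg_right this hpi.le
  · have hs : Real.sin (u/2) = Real.sin ((2*Real.pi - u)/2) := by
      rw [show (2*Real.pi - u)/2 = Real.pi - u/2 by ring, Real.sin_pi_sub]
    have := Real.mul_le_sin (x := (2*Real.pi - u)/2) (by linarith) (by linarith)
    have hmin : min u (2*Real.pi - u) ≤ 2*Real.pi - u := min_le_right _ _
    have hpi := Real.pi_pos
    rw [hs, div_le_iff₀ hpi]
    calc min u (2*Real.pi - u) ≤ 2*Real.pi - u := hmin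
      _ = (2 / Real.pi * ((2*Real.pi - u)/2)) * Real.pi := by field_simp
      _ ≤ Real.sin ((2*Real.pi - u)/2) * Real.pi := mul_le_mul_of_nonneg_right this hpi.le



lemma norm_dirich_le_min (n : ℕ) {u : ℝ} (h1 : 0 < u) (h2 : u < 2*Real.pi) :
    ‖dirich n u‖ ≤ Real.pi / min u (2*Real.pi - u) := by
  have hpi := Real.pi_pos
  have hminpos : 0 < min u (2*Real.pi - u) := lt_min h1 (by linarith)
  have hge := sin_half_ge h1 h2
  have hsin : 0 < Real.sin (u/2) := lt_of_lt_of_le (by positivity) hge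
  have hb := norm_dirich_le_inv_sin n (x := u) hsin
  have hstep : 1 / Real.sin (u/2) ≤ Real.pi / min u (2*Real.pi - u) := by
    rw [div_le_div_iff₀ hsin hminpos]
    calc 1 * min u (2*Real.pi - u) = (min u (2*Real.pi-u) / Real.pi) * Real.pi := by
          field_simp
      _ ≤ Real.sin (u/2) * Real.pi := mul_le_mul_of_nonneg_right hge hpi.le
      _ = Real.pi * Real.sin (u/2) := by ring
  linarith


-- harmonic-type bound
lemma sum_Icc_inv_le (N : ℕ) (hN : 1 ≤ N) :
    ∑ k ∈ Finset.Icc 1 N, (1 / (k:ℝ)) ≤ 1 + Real.log N := by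
  have h1 : ∑ k ∈ Finset.Icc 1 N, (1 / (k:ℝ)) = ((harmonic N : ℚ) : ℝ) := by
    rw [harmonic_eq_sum_Icc]
    push_cast
    simp [one_div]
  rw [h1]
  exact harmonic_le_one_add_log N

lemma pattern_sum (n : ℕ) (hn : 1 ≤ n) {s : ℝ} (hs0 : 0 ≤ s)
    (hs1 : s < 2*Real.pi/(2*(n:ℝ)+1)) :
    ∑ k ∈ Finset.range (2*n+1), ‖dirich n (s + k * (2*Real.pi/(2*(n:ℝ)+1)))‖
      ≤ (2*(n:ℝ)+1) * (5 + 2*Real.log n) := by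
  set h : ℝ := 2*Real.pi/(2*(n:ℝ)+1) with hh
  have hpi := Real.pi_pos
  have hm : (0:ℝ) < 2*(n:ℝ)+1 := by positivity
  have hhp : 0 < h := by positivity
  have hsplit : Finset.range (2*n+1) = insert 0 (insert (2*n) (Finset.Icc 1 (2*n-1))) := by
    ext j; simp only [Finset.mem_range, Finset.mem_insert, Finset.mem_Icc]; omega
  rw [hsplit, Finset.sum_insert (by intro hmem; simp only [Finset.mem_insert, Finset.mem_Icc] at hmem; omega),
    Finset.sum_insert (by intro hmem; exact absurd (Finset.mem_Icc.mp hmem) (by omega))]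
  have hmh : (2*(n:ℝ)+1) * h = 2*Real.pi := by rw [hh]; field_simp
  -- middle terms
  have hmid : ∀ k ∈ Finset.Icc 1 (2*n-1),
      ‖dirich n (s + k*h)‖ ≤ ((2*(n:ℝ)+1)/2) * (1/(k:ℝ) + 1/((2*n-k : ℕ):ℝ)) := by
    intro k hk
    simp only [Finset.mem_Icc] at hk
    have hk1 : (1:ℝ) ≤ (k:ℝ) := by exact_mod_cast hk.1
    have hk2 : (k:ℝ) ≤ 2*(n:ℝ)-1 := by
      have : (k:ℕ) ≤ 2*n-1 := hk.2
      have h2 : (k:ℝ) ≤ ((2*n-1 : ℕ):ℝ) := by exact_mod_cast this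
      have : ((2*n-1:ℕ):ℝ) = 2*(n:ℝ)-1 := by
        have : (2*n-1:ℕ) = 2*n-1 := rfl
        push_cast [Nat.cast_sub (by omega : 1 ≤ 2*n)]
        ring
      linarith
    have hu0 : 0 < s + k*h := by nlinarith
    have hu2 : s + k*h < 2*Real.pi := by nlinarith
    have hb := norm_dirich_le_min n hu0 hu2
    have hden : h * min (k:ℝ) (2*(n:ℝ)-k) ≤ min (s + k*h) (2*Real.pi - (s+k*h)) := by
      rcases min_le_iff.mp (le_refl (min (k:ℝ) (2*(n:ℝ)-k))) with _ | _
      all_goals {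
        apply le_min
        · have : h * min (k:ℝ) (2*(n:ℝ)-k) ≤ h * k :=
            mul_le_mul_of_nonneg_left (min_le_left _ _) hhp.le
          nlinarith
        · have : h * min (k:ℝ) (2*(n:ℝ)-k) ≤ h * (2*(n:ℝ)-k) :=
            mul_le_mul_of_nonneg_left (min_le_right _ _) hhp.le
          nlinarith }
    have hminpos : 0 < min (k:ℝ) (2*(n:ℝ)-k) := by
      apply lt_min (by linarith) (by linarith)
    have step1 : Real.pi / min (s + k*h) (2*Real.pi - (s+k*h))
        ≤ Real.pi / (h * min (k:ℝ) (2*(n:ℝ)-k)) := by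
      apply div_le_div_of_nonneg_left hpi.le (by positivity) hden
    have step2 : Real.pi / (h * min (k:ℝ) (2*(n:ℝ)-k))
        = ((2*(n:ℝ)+1)/2) * (1 / min (k:ℝ) (2*(n:ℝ)-k)) := by
      rw [hh]; field_simp
    have step3 : (1:ℝ) / min (k:ℝ) (2*(n:ℝ)-k) ≤ 1/(k:ℝ) + 1/((2*n-k : ℕ):ℝ) := by
      have hc : ((2*n-k : ℕ):ℝ) = 2*(n:ℝ) - k := by
        push_cast [Nat.cast_sub (by omega : k ≤ 2*n)]; ring
      rw [hc]
      rcases min_choice (k:ℝ) (2*(n:ℝ)-k) with hmc | hmc <;> rw [hmc]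
      · have hq : (0:ℝ) < 2*(n:ℝ)-(k:ℝ) := by linarith
        have : (0:ℝ) ≤ 1/(2*(n:ℝ)-(k:ℝ)) := by positivity
        linarith
      · have : (0:ℝ) ≤ 1/(k:ℝ) := by positivity
        linarith
    calc ‖dirich n (s + k*h)‖ ≤ Real.pi / min (s + k*h) (2*Real.pi - (s+k*h)) := hb
      _ ≤ Real.pi / (h * min (k:ℝ) (2*(n:ℝ)-k)) := step1
      _ = ((2*(n:ℝ)+1)/2) * (1 / min (k:ℝ) (2*(n:ℝ)-k)) := step2
      _ ≤ ((2*(n:ℝ)+1)/2) * (1/(k:ℝ) + 1/((2*n-k : ℕ):ℝ)) := by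
          apply mul_le_mul_of_nonneg_left step3 (by positivity)
  have hmidsum : ∑ k ∈ Finset.Icc 1 (2*n-1), ‖dirich n (s + k*h)‖
      ≤ ((2*(n:ℝ)+1)/2) * ∑ k ∈ Finset.Icc 1 (2*n-1), (1/(k:ℝ) + 1/((2*n-k : ℕ):ℝ)) := by
    rw [Finset.mul_sum]
    exact Finset.sum_le_sum hmid
  have hrefl : ∑ k ∈ Finset.Icc 1 (2*n-1), (1/((2*n-k : ℕ):ℝ))
      = ∑ k ∈ Finset.Icc 1 (2*n-1), (1/(k:ℝ)) := by
    refine Finset.sum_nbij' (fun k => 2*n - k) (fun k => 2*n - k) ?_ ?_ ?_ ?_ ?_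
    · intro k hk; simp only [Finset.mem_Icc] at *; omega
    · intro k hk; simp only [Finset.mem_Icc] at *; omega
    · intro k hk; simp only [Finset.mem_Icc] at hk; show 2*n - (2*n - k) = k; omega
    · intro k hk; simp only [Finset.mem_Icc] at hk; show 2*n - (2*n - k) = k; omega
    · intro k hk; rfl
  have hH : ∑ k ∈ Finset.Icc 1 (2*n-1), (1/(k:ℝ)) ≤ 1 + Real.log (2*(n:ℝ)) := by
    have hpos : (0:ℝ) < ((2*n-1:ℕ):ℝ) := by exact_mod_cast Nat.pos_of_ne_zero (by omega)
    have hle : ((2*n-1:ℕ):ℝ) ≤ 2*(n:ℝ) := by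
      push_cast [Nat.cast_sub (by omega : 1 ≤ 2*n)]; linarith
    calc ∑ k ∈ Finset.Icc 1 (2*n-1), (1/(k:ℝ)) ≤ 1 + Real.log ((2*n-1 : ℕ)) :=
          sum_Icc_inv_le (2*n-1) (by omega)
      _ ≤ 1 + Real.log (2*(n:ℝ)) := by
          have := Real.log_le_log hpos hle
          linarith
  have hsum2 : ∑ k ∈ Finset.Icc 1 (2*n-1), (1/(k:ℝ) + 1/((2*n-k : ℕ):ℝ))
      ≤ 2 * (1 + Real.log (2*(n:ℝ))) := by
    rw [Finset.sum_add_distrib, hrefl]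
    linarith
  have t0 : ‖dirich n (s + (0:ℕ) * h)‖ ≤ 2*(n:ℝ)+1 := norm_dirich_le n _
  have t2n : ‖dirich n (s + ((2*n : ℕ):ℝ) * h)‖ ≤ 2*(n:ℝ)+1 := norm_dirich_le n _
  have hmid' : ∑ k ∈ Finset.Icc 1 (2*n-1), ‖dirich n (s + k*h)‖
      ≤ ((2*(n:ℝ)+1)/2) * (2 * (1 + Real.log (2*(n:ℝ)))) := by
    refine hmidsum.trans ?_
    apply mul_le_mul_of_nonneg_left hsum2 (by positivity)
  have hlog2 : Real.log (2*(n:ℝ)) = Real.log 2 + Real.log (n:ℝ) := by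
    rw [Real.log_mul (by norm_num) (by exact_mod_cast (by omega : n ≠ 0))]
  have hl2 : Real.log 2 ≤ 1 := by
    have := Real.log_two_lt_d9
    linarith
  have hlogn : 0 ≤ Real.log (n:ℝ) := Real.log_nonneg (by exact_mod_cast hn)
  push_cast at t0 t2n ⊢
  nlinarith [hmid', hm]


lemma node_sum (n : ℕ) (hn : 1 ≤ n) (x : ℝ) :
    ∑ j ∈ Finset.range (2*n+1),
      ‖dirich n (x - 2*Real.pi*(j:ℝ)/(2*(n:ℝ)+1))‖
      ≤ (2*(n:ℝ)+1) * (5 + 2*Real.log n) := by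
  have hpi := Real.pi_pos
  set h : ℝ := 2*Real.pi/(2*(n:ℝ)+1) with hh
  have hhp : 0 < h := by rw [hh]; positivity
  set M : ℤ := ⌊x/h⌋ with hM
  set s : ℝ := x - M*h with hs
  have hs0 : 0 ≤ s := Int.sub_floor_div_mul_nonneg x hhp
  have hs1 : s < h := Int.sub_floor_div_mul_lt x hhp
  have hmZ : (0:ℤ) < (2*n+1 : ℤ) := by omega
  have hmh : ((2*n+1 : ℤ):ℝ) * h = 2*Real.pi := by
    push_cast; rw [hh]; field_simp
  have key : ∑ j ∈ Finset.range (2*n+1),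
      ‖dirich n (x - 2*Real.pi*(j:ℝ)/(2*(n:ℝ)+1))‖
      = ∑ k ∈ Finset.range (2*n+1), ‖dirich n (s + (k:ℝ)*h)‖ := by
    refine Finset.sum_nbij' (fun j => ((M - j) % (2*n+1 : ℤ)).toNat)
      (fun k => ((M - k) % (2*n+1 : ℤ)).toNat) ?_ ?_ ?_ ?_ ?_
    · intro j _
      simp only [Finset.mem_range]
      have h1 := Int.emod_nonneg (M - j) (by omega : (2*n+1:ℤ) ≠ 0)
      have h2 := Int.emod_lt_of_pos (M - j) hmZ
      omega
    · intro k _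
      simp only [Finset.mem_range]
      have h1 := Int.emod_nonneg (M - k) (by omega : (2*n+1:ℤ) ≠ 0)
      have h2 := Int.emod_lt_of_pos (M - k) hmZ
      omega
    · intro j hj
      simp only [Finset.mem_range] at hj
      show ((M - ((M - j) % (2*n+1 : ℤ)).toNat) % (2*n+1 : ℤ)).toNat = j
      have h1 := Int.emod_nonneg (M - j) (by omega : (2*n+1:ℤ) ≠ 0)
      have h2 := Int.emod_lt_of_pos (M - j) hmZ
      have hcast : (((M - j) % (2*n+1 : ℤ)).toNat : ℤ) = (M - j) % (2*n+1 : ℤ) := by omega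
      rw [hcast]
      have e1 : (M - (M - j) % (2*n+1 : ℤ)) % (2*n+1 : ℤ)
          = (M - (M - j)) % (2*n+1 : ℤ) := by
        conv_lhs => rw [Int.sub_emod]
        rw [Int.emod_emod_of_dvd _ dvd_rfl, ← Int.sub_emod]
      rw [e1]
      have : M - (M - j) = j := by ring
      rw [this, Int.emod_eq_of_lt (by omega) (by omega)]
      omega
    · intro k hk
      simp only [Finset.mem_range] at hk
      show ((M - ((M - k) % (2*n+1 : ℤ)).toNat) % (2*n+1 : ℤ)).toNat = k
      have h1 := Int.emod_nonneg (M - k) (by omega : (2*n+1:ℤ) ≠ 0)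
      have h2 := Int.emod_lt_of_pos (M - k) hmZ
      have hcast : (((M - k) % (2*n+1 : ℤ)).toNat : ℤ) = (M - k) % (2*n+1 : ℤ) := by omega
      rw [hcast]
      have e1 : (M - (M - k) % (2*n+1 : ℤ)) % (2*n+1 : ℤ)
          = (M - (M - k)) % (2*n+1 : ℤ) := by
        conv_lhs => rw [Int.sub_emod]
        rw [Int.emod_emod_of_dvd _ dvd_rfl, ← Int.sub_emod]
      rw [e1]
      have : M - (M - k) = k := by ring
      rw [this, Int.emod_eq_of_lt (by omega) (by omega)]
      omega
    · intro j hj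
      simp only [Finset.mem_range] at hj
      show ‖dirich n (x - 2*Real.pi*(j:ℝ)/(2*(n:ℝ)+1))‖
          = ‖dirich n (s + ((((M - j) % (2*n+1 : ℤ)).toNat : ℕ) : ℝ)*h)‖
      congr 1
      set r : ℤ := (M - j) % (2*n+1 : ℤ) with hr
      set q : ℤ := (M - j) / (2*n+1 : ℤ) with hq
      have hde : (2*n+1 : ℤ) * q + r = M - j := Int.mul_ediv_add_emod (M - j) (2*n+1 : ℤ)
      have h1 := Int.emod_nonneg (M - j) (by omega : (2*n+1:ℤ) ≠ 0)
      have hcast : ((r.toNat : ℕ) : ℝ) = (r : ℝ) := by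
        have : (r.toNat : ℤ) = r := by omega
        exact_mod_cast congrArg (fun z : ℤ => (z:ℝ)) this
      have hxj : x - 2*Real.pi*(j:ℝ)/(2*(n:ℝ)+1)
          = (s + (r.toNat : ℝ)*h) + q * (2*Real.pi) := by
        have hjh : 2*Real.pi*(j:ℝ)/(2*(n:ℝ)+1) = (j:ℝ) * h := by
          rw [hh]; ring
        have hrr : (r:ℝ) = (M:ℝ) - (j:ℝ) - ((2*n+1 : ℤ):ℝ) * (q:ℝ) := by
          have := congrArg (fun z : ℤ => (z:ℝ)) hde
          push_cast at this ⊢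
          linarith
        rw [hcast, hs, hjh, hrr, ← hmh]
        push_cast
        ring
      rw [hxj]
      have hp := (dirich_periodic n).sub_int_mul_eq
        (x := (s + (r.toNat : ℝ)*h) + (q:ℝ) * (2*Real.pi)) (n := q)
      have e2 : (s + (r.toNat : ℝ)*h) + (q:ℝ) * (2*Real.pi) - (q:ℝ) * (2*Real.pi)
          = s + (r.toNat : ℝ)*h := by ring
      rw [e2] at hp
      exact hp.symm
  rw [key]
  exact pattern_sum n hn hs0 hs1



lemma interp_sub (n : ℕ) (f g : ℝ → ℂ) (x : ℝ) :
    interp n (fun y => f y - g y) x = interp n f x - interp n g x := by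
  unfold interp
  rw [← mul_sub, ← Finset.sum_sub_distrib]
  congr 1
  refine Finset.sum_congr rfl fun j _ => ?_
  ring

lemma interp_norm_le (n : ℕ) (hn : 1 ≤ n) (g : ℝ → ℂ) {G : ℝ} (hG : 0 ≤ G)
    (hGb : ∀ y, ‖g y‖ ≤ G) (x : ℝ) :
    ‖interp n g x‖ ≤ G * (5 + 2*Real.log n) := by
  unfold interp
  have hm : (0:ℝ) < 2*(n:ℝ)+1 := by positivity
  rw [norm_mul]
  have h1 : ‖((((2 * (n : ℝ) + 1))⁻¹ : ℝ) : ℂ)‖ = (2*(n:ℝ)+1)⁻¹ := by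
    rw [Complex.norm_real, Real.norm_of_nonneg (by positivity)]
  rw [h1]
  have h2 : ‖∑ j ∈ Finset.range (2 * n + 1),
      g (2 * Real.pi * (j : ℝ) / (2 * (n : ℝ) + 1)) *
        dirich n (x - 2 * Real.pi * (j : ℝ) / (2 * (n : ℝ) + 1))‖
      ≤ G * ((2*(n:ℝ)+1) * (5 + 2*Real.log n)) := by
    calc ‖∑ j ∈ Finset.range (2 * n + 1),
        g (2 * Real.pi * (j : ℝ) / (2 * (n : ℝ) + 1)) *
          dirich n (x - 2 * Real.pi * (j : ℝ) / (2 * (n : ℝ) + 1))‖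
        ≤ ∑ j ∈ Finset.range (2 * n + 1),
          ‖g (2 * Real.pi * (j : ℝ) / (2 * (n : ℝ) + 1)) *
            dirich n (x - 2 * Real.pi * (j : ℝ) / (2 * (n : ℝ) + 1))‖ :=
          norm_sum_le _ _
      _ ≤ ∑ j ∈ Finset.range (2 * n + 1),
          G * ‖dirich n (x - 2 * Real.pi * (j : ℝ) / (2 * (n : ℝ) + 1))‖ := by
          refine Finset.sum_le_sum fun j _ => ?_
          rw [norm_mul]
          exact mul_le_mul_of_nonneg_right (hGb _) (norm_nonneg _)
      _ = G * ∑ j ∈ Finset.range (2 * n + 1),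
          ‖dirich n (x - 2 * Real.pi * (j : ℝ) / (2 * (n : ℝ) + 1))‖ := by
          rw [Finset.mul_sum]
      _ ≤ G * ((2*(n:ℝ)+1) * (5 + 2*Real.log n)) :=
          mul_le_mul_of_nonneg_left (node_sum n hn x) hG
  calc (2*(n:ℝ)+1)⁻¹ * ‖∑ j ∈ Finset.range (2 * n + 1),
      g (2 * Real.pi * (j : ℝ) / (2 * (n : ℝ) + 1)) *
        dirich n (x - 2 * Real.pi * (j : ℝ) / (2 * (n : ℝ) + 1))‖
      ≤ (2*(n:ℝ)+1)⁻¹ * (G * ((2*(n:ℝ)+1) * (5 + 2*Real.log n))) :=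
        mul_le_mul_of_nonneg_left h2 (by positivity)
    _ = G * (5 + 2*Real.log n) := by field_simp


end Aux16

/-- Lebesgue inequality for trigonometric interpolation. There is an
absolute constant `C` such that for all `n ≥ 1` and every continuous `2π`-periodic `f`,
`‖f − I_n(f)‖_∞ ≤ C ln(n+1) E_n(f)_∞`. -/
theorem statement16 :
    ∃ C : ℝ, 0 < C ∧ ∀ n : ℕ, 1 ≤ n → ∀ f : ℝ → ℂ,
      Continuous f → Function.Periodic f (2 * Real.pi) →
      supNorm (fun x => f x - interp n f x) ≤
        ENNReal.ofReal (C * Real.log ((n : ℝ) + 1)) *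
          ⨅ t ∈ TrigPoly n, supNorm (fun x => f x - t x) := by
  refine ⟨20, by norm_num, ?_⟩
  intro n hn f _ _
  have hn1 : (1:ℝ) ≤ (n:ℝ) := by exact_mod_cast hn
  have hlog2 : (0.6931471803 : ℝ) < Real.log 2 := Real.log_two_gt_d9
  have hlogn1 : Real.log 2 ≤ Real.log ((n:ℝ)+1) :=
    Real.log_le_log (by norm_num) (by linarith)
  have hlogpos : (0:ℝ) < 20 * Real.log ((n:ℝ)+1) := by linarith
  set c : ℝ≥0∞ := ENNReal.ofReal (20 * Real.log ((n : ℝ) + 1)) with hc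
  have hc0 : c ≠ 0 := by
    rw [hc]
    simp only [ne_eq, ENNReal.ofReal_eq_zero, not_le]
    exact hlogpos
  have hctop : c ≠ ⊤ := ENNReal.ofReal_ne_top
  rw [mul_comm, ← ENNReal.div_le_iff hc0 hctop]
  refine le_iInf₂ fun t ht => ?_
  rw [ENNReal.div_le_iff hc0 hctop]
  -- per-t estimate
  by_cases hX : supNorm (fun x => f x - t x) = ⊤
  · rw [hX, ENNReal.top_mul hc0]
    exact le_top
  set G : ℝ := (supNorm (fun x => f x - t x)).toReal with hG
  have hGnn : 0 ≤ G := ENNReal.toReal_nonneg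
  have hGb : ∀ y, ‖f y - t y‖ ≤ G := by
    intro y
    have h1 : (‖f y - t y‖₊ : ℝ≥0∞) ≤ supNorm (fun x => f x - t x) :=
      le_iSup (fun x => (‖f x - t x‖₊ : ℝ≥0∞)) y
    have h2 := ENNReal.toReal_mono hX h1
    simpa using h2
  have hpoint : ∀ x, ‖f x - interp n f x‖ ≤ G * (20 * Real.log ((n:ℝ)+1)) := by
    intro x
    have hsplit : f x - interp n f x
        = (f x - t x) - interp n (fun y => f y - t y) x := by
      rw [interp_sub n f t x, interp_trig n ht x]
      ring
    have hlogn : 0 ≤ Real.log (n:ℝ) := Real.log_nonneg hn1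
    have hlognn : Real.log (n:ℝ) ≤ Real.log ((n:ℝ)+1) :=
      Real.log_le_log (by linarith) (by linarith)
    calc ‖f x - interp n f x‖
        = ‖(f x - t x) - interp n (fun y => f y - t y) x‖ := by rw [hsplit]
      _ ≤ ‖f x - t x‖ + ‖interp n (fun y => f y - t y) x‖ := norm_sub_le _ _
      _ ≤ G + G * (5 + 2*Real.log n) := by
          have := interp_norm_le n hn (fun y => f y - t y) hGnn hGb x
          have hfx := hGb x
          linarith
      _ = G * (6 + 2*Real.log n) := by ring
      _ ≤ G * (20 * Real.log ((n:ℝ)+1)) := by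
          apply mul_le_mul_of_nonneg_left _ hGnn
          nlinarith
  calc supNorm (fun x => f x - interp n f x)
      ≤ ENNReal.ofReal (G * (20 * Real.log ((n:ℝ)+1))) := by
        refine iSup_le fun x => ?_
        rw [← ENNReal.ofReal_coe_nnreal, coe_nnnorm]
        exact ENNReal.ofReal_le_ofReal (hpoint x)
    _ = ENNReal.ofReal G * c := by
        rw [hc, ENNReal.ofReal_mul hGnn]
    _ = supNorm (fun x => f x - t x) * c := by
        rw [hG, ENNReal.ofReal_toReal hX]

end
end
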